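/- Let S be a finite set of points in the Euclidean plane and G the weighted unit-disk graph on S. Let s, a ∈ S be in the same connected component of G and let ⟨z₀, …, z_t⟩ be an edge-minimal shortest path from s to a (so it has t edges). Then d_G(s,a) ≥ (t − 1)/2. -/

import Mathlib

noncomputable section

abbrev Pt := EuclideanSpace ℝ (Fin 2)

/-- The weighted unit-disk graph on a finite point set `S`: vertices are the points of
`S`, two distinct points are adjacent iff their Euclidean distance is at most 1. -/
def UDG (S : Finset Pt) : SimpleGraph {x : Pt // x ∈ S} where
  Adj a b := a ≠ b ∧ dist (a : Pt) (b : Pt) ≤ 1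
  symm := by
    constructor
    intro a b hab
    exact ⟨hab.1.symm, by rw [dist_comm]; exact hab.2⟩
  loopless := by
    constructor
    intro a ha
    exact ha.1 rfl

/-- The (weighted) length of a walk: the sum of the Euclidean lengths of its edges. -/
def wlen {S : Finset Pt} {u v : {x : Pt // x ∈ S}} (p : (UDG S).Walk u v) : ℝ :=
  (p.darts.map (fun d => dist (d.toProd.1 : Pt) (d.toProd.2 : Pt))).sum

/-- The shortest-path distance in the weighted unit-disk graph. -/
def dG (S : Finset Pt) (u v : {x : Pt // x ∈ S}) : ℝ :=
  sInf {L : ℝ | ∃ p : (UDG S).Walk u v, wlen p = L}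

lemma wlen_nonneg {S : Finset Pt} {u v : {x : Pt // x ∈ S}} (p : (UDG S).Walk u v) :
    0 ≤ wlen p := by
  apply List.sum_nonneg
  intro x hx
  simp only [List.mem_map] at hx
  obtain ⟨d, _, rfl⟩ := hx
  exact dist_nonneg

lemma wlen_nil {S : Finset Pt} {u : {x : Pt // x ∈ S}} :
    wlen (SimpleGraph.Walk.nil : (UDG S).Walk u u) = 0 := rfl

lemma wlen_cons {S : Finset Pt} {u v w : {x : Pt // x ∈ S}} (h : (UDG S).Adj u v)
    (p : (UDG S).Walk v w) :
    wlen (SimpleGraph.Walk.cons h p) = dist (u : Pt) (v : Pt) + wlen p := by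
  simp [wlen]

lemma wlen_copy {S : Finset Pt} {u v u' v' : {x : Pt // x ∈ S}} (p : (UDG S).Walk u v)
    (hu : u = u') (hv : v = v') : wlen (p.copy hu hv) = wlen p := by
  subst hu; subst hv; rfl

lemma aux (S : Finset Pt) : ∀ n : ℕ, ∀ (s a : {x : Pt // x ∈ S}) (p : (UDG S).Walk s a),
    p.length = n →
    (∀ q : (UDG S).Walk s a, wlen p ≤ wlen q) →
    (∀ q : (UDG S).Walk s a, wlen q ≤ wlen p → p.length ≤ q.length) →
    ((p.length : ℝ) - 1) / 2 ≤ wlen p := by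
  intro n
  induction n using Nat.strong_induction_on with
  | _ n ih =>
    intro s a p hn h1 h2
    cases p with
    | nil =>
      simp [wlen_nil]
      norm_num
    | @cons _ v _ h q =>
      cases q with
      | nil =>
        simp [wlen_cons, wlen_nil]
      | @cons _ w _ h' q =>
        -- p = cons h (cons h' q), s → v → w → ⋯ → a
        have hd1 : 0 < dist (s : Pt) (v : Pt) := by
          refine dist_pos.mpr ?_
          exact fun he => h.1 (Subtype.coe_injective he)
        have hkey : 1 < dist (s : Pt) (v : Pt) + dist (v : Pt) (w : Pt) := by
          by_contra hle
          push_neg at hle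
          by_cases hsw : s = w
          · have := h1 ((q.copy hsw.symm rfl).copy rfl rfl)
            rw [wlen_copy, wlen_copy, wlen_cons, wlen_cons] at this
            have hd2 : 0 ≤ dist (v : Pt) (w : Pt) := dist_nonneg
            linarith
          · have hdw : dist (s : Pt) (w : Pt) ≤ 1 :=
              le_trans (dist_triangle (s : Pt) (v : Pt) (w : Pt)) hle
            have hadj : (UDG S).Adj s w := ⟨hsw, hdw⟩
            have hwle : wlen (SimpleGraph.Walk.cons hadj q) ≤
                wlen (SimpleGraph.Walk.cons h (SimpleGraph.Walk.cons h' q)) := by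
              rw [wlen_cons, wlen_cons, wlen_cons]
              have := dist_triangle (s : Pt) (v : Pt) (w : Pt)
              linarith
            have := h2 (SimpleGraph.Walk.cons hadj q) hwle
            simp [SimpleGraph.Walk.length_cons] at this
        have q1 : ∀ r : (UDG S).Walk w a, wlen q ≤ wlen r := by
          intro r
          have := h1 (SimpleGraph.Walk.cons h (SimpleGraph.Walk.cons h' r))
          rw [wlen_cons, wlen_cons, wlen_cons, wlen_cons] at this
          linarith
        have q2 : ∀ r : (UDG S).Walk w a, wlen r ≤ wlen q → q.length ≤ r.length := by
          intro r hr
          have hle : wlen (SimpleGraph.Walk.cons h (SimpleGraph.Walk.cons h' r)) ≤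
              wlen (SimpleGraph.Walk.cons h (SimpleGraph.Walk.cons h' q)) := by
            rw [wlen_cons, wlen_cons, wlen_cons, wlen_cons]
            linarith
          have := h2 (SimpleGraph.Walk.cons h (SimpleGraph.Walk.cons h' r)) hle
          simp [SimpleGraph.Walk.length_cons] at this
          omega
        have hlt : q.length < n := by
          simp [SimpleGraph.Walk.length_cons] at hn
          omega
        have ihq := ih q.length hlt w a q rfl q1 q2
        rw [wlen_cons, wlen_cons]
        simp only [SimpleGraph.Walk.length_cons]
        push_cast
        push_cast at ihq
        linarith

/-- Inequality inside Fact 5 (fact-approx): an edge-minimal shortest path with `t`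
edges from `s` to `a` satisfies `d_G(s,a) ≥ (t-1)/2`. -/
theorem stmt_8 (S : Finset Pt) (s a : {x : Pt // x ∈ S})
    (p : (UDG S).Walk s a) (hsp : wlen p = dG S s a)
    (hmin : ∀ q : (UDG S).Walk s a, wlen q = dG S s a → p.length ≤ q.length) :
    ((p.length : ℝ) - 1) / 2 ≤ dG S s a := by
  have hbdd : BddBelow {L : ℝ | ∃ q : (UDG S).Walk s a, wlen q = L} := by
    refine ⟨0, ?_⟩
    rintro L ⟨q, rfl⟩
    exact wlen_nonneg q
  have hdle : ∀ q : (UDG S).Walk s a, dG S s a ≤ wlen q := fun q =>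
    csInf_le hbdd ⟨q, rfl⟩
  have h1 : ∀ q : (UDG S).Walk s a, wlen p ≤ wlen q := fun q => hsp ▸ hdle q
  have h2 : ∀ q : (UDG S).Walk s a, wlen q ≤ wlen p → p.length ≤ q.length := by
    intro q hq
    exact hmin q (le_antisymm (hsp ▸ hq) (hdle q))
  have := aux S p.length s a p rfl h1 h2
  linarith [this, hsp ▸ le_refl (wlen p)]
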